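/- Let g: ℝ → ℝ be convex and differentiable, λ₂ > 0, f(x) = g(x) + λ₂x², and let x* minimize f. For points x₁, x₂ with f'(x₁)·f'(x₂) ≤ 0 and α₁ − α₂ − 2λ₂(x₁ − x₂) ≠ 0 (where αᵢ = f'(xᵢ)), the two-point quadratic cut lower bound f(x̂) computed in Theorem 4.3 is at least as large as the two-point linear cutting-plane lower bound of Theorem 4.2 (when the latter's denominator α₁ − α₂ is nonzero). -/

import Mathlib

theorem stmt_18 (g : ℝ → ℝ) (hconv : ConvexOn ℝ Set.univ g)
    (hdiff : Differentiable ℝ g) (lam2 : ℝ) (hlam2 : 0 < lam2)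
    (f : ℝ → ℝ) (hf : ∀ x, f x = g x + lam2 * x ^ 2)
    (xstar : ℝ) (hmin : ∀ x, f xstar ≤ f x)
    (x₁ x₂ α₁ α₂ : ℝ) (hα₁ : α₁ = deriv f x₁) (hα₂ : α₂ = deriv f x₂)
    (hsign : α₁ * α₂ ≤ 0)
    (hdenq : α₁ - α₂ - 2 * lam2 * (x₁ - x₂) ≠ 0)
    (hdenl : α₁ - α₂ ≠ 0)
    (xhat : ℝ)
    (hxhat : xhat = (-f x₁ + f x₂ + α₁ * x₁ - α₂ * x₂ - lam2 * (x₁ ^ 2 - x₂ ^ 2)) /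
      (α₁ - α₂ - 2 * lam2 * (x₁ - x₂))) :
    f x₁ + α₁ * (xhat - x₁) + lam2 * (xhat - x₁) ^ 2 ≥
      (α₁ * f x₂ - α₂ * f x₁ + α₁ * α₂ * (x₁ - x₂)) / (α₁ - α₂) := by
  set A := f x₁ with hA
  set B := f x₂ with hB
  set L : ℝ := (α₁ * B - α₂ * A + α₁ * α₂ * (x₁ - x₂)) / (α₁ - α₂) with hLdef
  set xL : ℝ := (B - A + α₁ * x₁ - α₂ * x₂) / (α₁ - α₂) with hxL
  have hL1 : A + α₁ * (xL - x₁) = L := by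
    rw [hxL, hLdef]; field_simp; ring
  have hL2 : B + α₂ * (xL - x₂) = L := by
    rw [hxL, hLdef]; field_simp; ring
  have heq : A + α₁ * (xhat - x₁) + lam2 * (xhat - x₁) ^ 2
      = B + α₂ * (xhat - x₂) + lam2 * (xhat - x₂) ^ 2 := by
    have hk : xhat * (α₁ - α₂ - 2 * lam2 * (x₁ - x₂)) = -A + B + α₁ * x₁ - α₂ * x₂ - lam2 * (x₁ ^ 2 - x₂ ^ 2) := by
      rw [hxhat]; exact div_mul_cancel₀ _ hdenq
    linear_combination hk
  have hsq1 : 0 ≤ lam2 * (xhat - x₁) ^ 2 := by positivity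
  have hsq2 : 0 ≤ lam2 * (xhat - x₂) ^ 2 := by positivity
  rcases mul_nonpos_iff.mp hsign with ⟨h1, h2⟩ | ⟨h1, h2⟩ <;>
    rcases le_total xL xhat with hx | hx
  · -- α₁ ≥ 0, α₂ ≤ 0, xhat ≥ xL : use line 1
    nlinarith [mul_nonneg h1 (sub_nonneg.mpr hx)]
  · -- use line 2
    nlinarith [mul_nonneg (neg_nonneg.mpr h2) (sub_nonneg.mpr hx)]
  · -- α₁ ≤ 0, α₂ ≥ 0, xhat ≥ xL : use line 2
    nlinarith [mul_nonneg h2 (sub_nonneg.mpr hx)]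
  · -- use line 1
    nlinarith [mul_nonneg (neg_nonneg.mpr h1) (sub_nonneg.mpr hx)]
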